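/- arXiv:1603.08556 — 3 statements merged into one kernel-verified Lean document; each statement's English description precedes it below -/
import Mathlib

section
/- Let k ≥ 2, let M be a k×k matrix with entries in {0,1} which is primitive (there exists N ≥ 1 such that every entry of M^N is positive), and fix a state p ∈ {1,…,k}. For n ≥ 1 let Sₙ be the number of sequences (i₀,i₁,…,iₙ) ∈ {1,…,k}^{n+1} such that i₀ = iₙ = p, iⱼ ≠ p for all 0 < j < n, and M_{iⱼ,iⱼ₊₁} = 1 for all 0 ≤ j < n (i.e., the number of admissible words of length n+1 in which the symbol p occurs only as the first and the last symbol). Then there exist a constant C > 0 and a number h with 0 ≤ h < log ρ(M), where ρ(M) denotes the spectral radius of M, such that Sₙ ≤ C·e^{h·n} for all n ≥ 1. -/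
open Real

open Finset in
lemma frw_sumcount {K : Type*} [Fintype K] [DecidableEq K]
    (A : Matrix K K ℕ) : ∀ (m : ℕ) (i j : K),
    (A ^ m) i j = ∑ v : Fin (m+1) → K,
      if v 0 = i ∧ v (Fin.last m) = j then (∏ t : Fin m, A (v t.castSucc) (v t.succ)) else 0 := by
  intro m
  induction m with
  | zero =>
    intro i j
    rw [pow_zero]
    rw [← (Equiv.funUnique (Fin 1) K).symm.sum_comp]
    simp only [Equiv.funUnique_symm_apply]
    rw [Matrix.one_apply]
    by_cases hij : i = j
    · subst hij
      simp
    · rw [if_neg hij]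
      rw [Finset.sum_eq_zero]
      intro x _
      rw [if_neg]
      rintro ⟨rfl, rfl⟩
      exact hij rfl
  | succ m IH =>
    intro i j
    rw [pow_succ', Matrix.mul_apply]
    have hL : ∀ l, (A ^ m) l j * 1 = (A^m) l j := fun l => mul_one _
    calc ∑ l, A i l * (A ^ m) l j
        = ∑ l, ∑ v : Fin (m+1) → K,
            if v 0 = l ∧ v (Fin.last m) = j then A i l * ∏ t : Fin m, A (v t.castSucc) (v t.succ) else 0 := by
          refine Finset.sum_congr rfl fun l _ => ?_
          rw [IH l j, Finset.mul_sum]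
          refine Finset.sum_congr rfl fun v _ => ?_
          rw [mul_ite, mul_zero]
      _ = ∑ v : Fin (m+1) → K,
            if v (Fin.last m) = j then A i (v 0) * ∏ t : Fin m, A (v t.castSucc) (v t.succ) else 0 := by
          rw [Finset.sum_comm]
          refine Finset.sum_congr rfl fun v _ => ?_
          simp only [ite_and]
          rw [Finset.sum_ite_eq Finset.univ (v 0)
            (fun l => if v (Fin.last m) = j then A i l * ∏ t : Fin m, A (v t.castSucc) (v t.succ) else 0)]
          simp
      _ = _ := by
          rw [← (Fin.consEquiv (fun _ : Fin (m+2) => K)).sum_comp]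
          rw [Fintype.sum_prod_type]
          have hstep : ∀ (x : K) (v : Fin (m+1) → K),
              (∏ t : Fin (m+1), A ((Fin.cons x v : Fin (m+2) → K) t.castSucc) ((Fin.cons x v : Fin (m+2) → K) t.succ))
              = A x (v 0) * ∏ t : Fin m, A (v t.castSucc) (v t.succ) := by
            intro x v
            rw [Fin.prod_univ_succ]
            refine congrArg₂ (· * ·) (by simp) (Finset.prod_congr rfl fun t _ => ?_)
            rw [← Fin.succ_castSucc]
            simp [Fin.cons_succ]
          calc ∑ v : Fin (m+1) → K, (if v (Fin.last m) = j then A i (v 0) * ∏ t : Fin m, A (v t.castSucc) (v t.succ) else 0)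
              = ∑ x : K, ∑ v : Fin (m+1) → K,
                if x = i ∧ v (Fin.last m) = j then A x (v 0) * ∏ t : Fin m, A (v t.castSucc) (v t.succ) else 0 := by
                simp only [ite_and]
                simp only [Finset.sum_ite_irrel, Finset.sum_const_zero]
                rw [Finset.sum_ite_eq' Finset.univ i
                  (fun x => ∑ v : Fin (m+1) → K, if v (Fin.last m) = j then A x (v 0) * ∏ t : Fin m, A (v t.castSucc) (v t.succ) else 0)]
                simp
            _ = _ := by
                refine Finset.sum_congr rfl fun x _ => Finset.sum_congr rfl fun v _ => ?_
                have h0 : (Fin.consEquiv (fun _ : Fin (m+2) => K)) (x, v) = Fin.cons x v := rfl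
                rw [h0]
                have h1 : Fin.cons (α := fun _ => K) x v 0 = x := rfl
                have h2 : Fin.cons (α := fun _ => K) x v (Fin.last (m+1)) = v (Fin.last m) := by
                  rw [← Fin.succ_last, Fin.cons_succ]
                rw [h1, h2, hstep]

lemma frw_card {K : Type*} [Fintype K] [DecidableEq K] (A : Matrix K K ℕ)
    (hA : ∀ i j, A i j = 0 ∨ A i j = 1) (m : ℕ) :
    Nat.card {v : Fin (m+1) → K // ∀ t : Fin m, A (v t.castSucc) (v t.succ) = 1}
      = ∑ i : K, ∑ j : K, (A ^ m) i j := by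
  classical
  have hprod : ∀ v : Fin (m+1) → K, (∏ t : Fin m, A (v t.castSucc) (v t.succ))
      = if (∀ t : Fin m, A (v t.castSucc) (v t.succ) = 1) then 1 else 0 := by
    intro v
    by_cases h : ∀ t : Fin m, A (v t.castSucc) (v t.succ) = 1
    · rw [if_pos h]
      exact Finset.prod_eq_one fun t _ => h t
    · rw [if_neg h]
      push_neg at h
      obtain ⟨t, ht⟩ := h
      exact Finset.prod_eq_zero (Finset.mem_univ t) ((hA _ _).resolve_right ht)
  rw [Nat.card_eq_fintype_card, Fintype.card_subtype, Finset.card_filter]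
  have hsc : ∀ i j, (A ^ m) i j = ∑ v : Fin (m+1) → K,
      if v 0 = i ∧ v (Fin.last m) = j then (∏ t : Fin m, A (v t.castSucc) (v t.succ)) else 0 :=
    frw_sumcount A m
  symm
  calc ∑ i : K, ∑ j : K, (A ^ m) i j
      = ∑ i : K, ∑ v : Fin (m+1) → K, ∑ j : K,
          (if v 0 = i ∧ v (Fin.last m) = j then (∏ t : Fin m, A (v t.castSucc) (v t.succ)) else 0) := by
        refine Finset.sum_congr rfl fun i _ => ?_
        simp only [hsc]
        exact Finset.sum_comm
    _ = ∑ v : Fin (m+1) → K, ∑ i : K, ∑ j : K,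
          (if v 0 = i ∧ v (Fin.last m) = j then (∏ t : Fin m, A (v t.castSucc) (v t.succ)) else 0) :=
        Finset.sum_comm
    _ = ∑ v : Fin (m+1) → K, (∏ t : Fin m, A (v t.castSucc) (v t.succ)) := by
        refine Finset.sum_congr rfl fun v _ => ?_
        simp only [ite_and, Finset.sum_ite_irrel, Finset.sum_const_zero,
          Finset.sum_ite_eq, Finset.mem_univ, if_true]
    _ = _ := Finset.sum_congr rfl fun v _ => (hprod v)

section frwMat
variable {K : Type*} [Fintype K] [DecidableEq K]

lemma frw_le_mul {X X' Y Y' : Matrix K K ℕ} (h1 : ∀ i j, X i j ≤ X' i j)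
    (h2 : ∀ i j, Y i j ≤ Y' i j) : ∀ i j, (X * Y) i j ≤ (X' * Y') i j := by
  intro i j
  rw [Matrix.mul_apply, Matrix.mul_apply]
  exact Finset.sum_le_sum fun l _ => Nat.mul_le_mul (h1 i l) (h2 l j)

lemma frw_le_pow {X Y : Matrix K K ℕ} (h : ∀ i j, X i j ≤ Y i j) :
    ∀ n, ∀ i j, (X ^ n) i j ≤ (Y ^ n) i j := by
  intro n
  induction n with
  | zero => simp
  | succ n IH =>
    rw [pow_succ, pow_succ]
    exact frw_le_mul IH h

lemma frw_entry_mul (X Y : Matrix K K ℕ) (i j l : K) : X i l * Y l j ≤ (X * Y) i j := by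
  rw [Matrix.mul_apply]
  exact Finset.single_le_sum (f := fun l => X i l * Y l j) (fun _ _ => Nat.zero_le _)
    (Finset.mem_univ l)

lemma frw_sandwich (X Z Y : Matrix K K ℕ) (p : K) (hX : ∀ i, 1 ≤ X p i)
    (hY : ∀ j, 1 ≤ Y j p) : ∑ i : K, ∑ j : K, Z i j ≤ (X * Z * Y) p p := by
  calc ∑ i : K, ∑ j : K, Z i j = ∑ j : K, ∑ i : K, Z i j := Finset.sum_comm
    _ ≤ ∑ j : K, (X * Z) p j * Y j p := by
        refine Finset.sum_le_sum fun j _ => ?_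
        have h1 : ∑ i : K, Z i j ≤ (X * Z) p j := by
          rw [Matrix.mul_apply]
          exact Finset.sum_le_sum fun i _ => Nat.le_mul_of_pos_left _ (hX i)
        exact le_trans (Nat.le_mul_of_pos_right _ (hY j)) (Nat.mul_le_mul_right _ h1)
    _ = (X * Z * Y) p p := (Matrix.mul_apply (M := X * Z) (N := Y)).symm

variable (p : K)

lemma frw_d0_add_e0 :
    Matrix.diagonal (fun i => if i = p then (0:ℕ) else 1)
      + Matrix.diagonal (fun i : K => if i = p then (1:ℕ) else 0) = 1 := by
  ext i j
  by_cases hij : i = j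
  · subst hij
    by_cases hp : i = p <;>
      simp [Matrix.add_apply, Matrix.diagonal_apply_eq, Matrix.one_apply_eq, hp]
  · simp [Matrix.add_apply, Matrix.diagonal_apply_ne _ hij, Matrix.one_apply_ne hij]

lemma frw_e0_mid (X Y : Matrix K K ℕ) (i j : K) :
    (X * Matrix.diagonal (fun i : K => if i = p then (1:ℕ) else 0) * Y) i j
      = X i p * Y p j := by
  rw [Matrix.mul_apply]
  rw [Finset.sum_eq_single p]
  · rw [Matrix.mul_diagonal]
    simp
  · intro l _ hl
    rw [Matrix.mul_diagonal]
    simp [hl]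
  · intro h
    exact absurd (Finset.mem_univ p) h

lemma frw_renewal (K0 : Matrix K K ℕ) : ∀ (m s : ℕ),
    (((K0 * Matrix.diagonal (fun i => if i = p then (0:ℕ) else 1))^s * K0^(m+1)) p p)
      = ∑ r ∈ Finset.range (m+1),
          (((K0 * Matrix.diagonal (fun i => if i = p then (0:ℕ) else 1))^(s+r) * K0) p p)
            * ((K0^(m-r)) p p) := by
  set d0 : Matrix K K ℕ := Matrix.diagonal (fun i => if i = p then (0:ℕ) else 1) with hd0
  set e0 : Matrix K K ℕ := Matrix.diagonal (fun i => if i = p then (1:ℕ) else 0) with he0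
  have hsplit : K0 = K0 * d0 + K0 * e0 := by
    rw [← mul_add, frw_d0_add_e0, mul_one]
  intro m
  induction m with
  | zero =>
    intro s
    simp [Matrix.one_apply_eq]
  | succ m IH =>
    intro s
    have hpow : K0^(m+2) = K0 * K0^(m+1) := by rw [pow_succ']
    calc ((K0 * d0)^s * K0^(m+2)) p p
        = ((K0 * d0)^(s+1) * K0^(m+1)) p p
            + (((K0 * d0)^s * K0) p p) * ((K0^(m+1)) p p) := by
          have hkey : (K0*d0)^s * K0^(m+2)
              = (K0*d0)^(s+1) * K0^(m+1) + ((K0*d0)^s * K0) * e0 * K0^(m+1) := by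
            rw [hpow, show K0 * K0^(m+1) = (K0*d0 + K0*e0) * K0^(m+1) from by rw [← hsplit]]
            rw [add_mul, mul_add]
            congr 1
            · rw [← mul_assoc, ← pow_succ]
            · simp only [mul_assoc]
          rw [hkey, Matrix.add_apply, frw_e0_mid]
      _ = _ := by
          rw [IH (s+1)]
          conv_rhs => rw [Finset.sum_range_succ']
          congr 1
          · refine Finset.sum_congr rfl fun r _ => ?_
            rw [show s+1+r = s+(r+1) from by omega, Nat.succ_sub_succ]

lemma frw_F3 (m0 b0 : Matrix K K ℕ) (N : ℕ) (hN : 1 ≤ N)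
    (hle : ∀ i j, b0 i j ≤ m0 i j)
    (hdb : Matrix.diagonal (fun i => if i = p then (0:ℕ) else 1) * b0 = b0) :
    ∀ s, ∀ i j, (m0^N * b0^(s*(2*N+1) + 1) * m0^N) i j
      ≤ (((m0^(2*N+1)) * Matrix.diagonal (fun i => if i = p then (0:ℕ) else 1))^s
          * m0^(2*N+1)) i j := by
  set d0 : Matrix K K ℕ := Matrix.diagonal (fun i => if i = p then (0:ℕ) else 1) with hd0
  set K0 : Matrix K K ℕ := m0^(2*N+1) with hK0
  have hb0N : d0 * b0 ^ N = b0 ^ N := by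
    obtain ⟨t, ht⟩ : ∃ t, N = t + 1 := ⟨N - 1, by omega⟩
    subst ht
    rw [pow_succ', ← mul_assoc, hdb]
  intro s
  induction s with
  | zero =>
    intro i j
    have h2 : m0^N * m0 * m0^N = K0 := by
      rw [← pow_succ, ← pow_add, hK0]
      congr 1
      omega
    have h3 : (K0 * d0)^0 * K0 = K0 := by rw [pow_zero, one_mul]
    rw [h3, ← h2]
    have hb1 : b0^(0*(2*N+1)+1) = b0 := by norm_num
    rw [hb1]
    exact frw_le_mul (frw_le_mul (fun i j => le_refl _) hle) (fun i j => le_refl _) i j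
  | succ s IH =>
    intro i j
    have hsplit : m0^N * b0^((s+1)*(2*N+1) + 1) * m0^N
        = (m0^N * b0^(N+1)) * (d0 * ((b0^N * b0^(s*(2*N+1)+1)) * m0^N)) := by
      have he : (s+1)*(2*N+1) + 1 = (N+1) + (N + (s*(2*N+1)+1)) := by ring
      rw [he, pow_add, pow_add]
      simp only [mul_assoc]
      rw [← mul_assoc d0 (b0^N), hb0N, pow_add b0 N (s*(2*N+1)+1)]
      simp only [mul_assoc]
    have htarget : (K0 * d0)^(s+1) * K0 = (K0 * d0) * ((K0*d0)^s * K0) := by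
      rw [pow_succ', mul_assoc]
    rw [hsplit, htarget]
    have hA : ∀ i j, (m0^N * b0^(N+1)) i j ≤ K0 i j := by
      intro i j
      have : m0^N * m0^(N+1) = K0 := by rw [← pow_add, hK0]; congr 1; omega
      rw [← this]
      exact frw_le_mul (fun i j => le_refl _) (frw_le_pow hle (N+1)) i j
    have hB : ∀ i j, ((b0^N * b0^(s*(2*N+1)+1)) * m0^N) i j ≤ ((K0*d0)^s * K0) i j := by
      intro i j
      refine le_trans ?_ (IH i j)
      exact frw_le_mul (frw_le_mul (frw_le_pow hle N) (fun i j => le_refl _))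
        (fun i j => le_refl _) i j
    rw [mul_assoc K0 d0]
    exact frw_le_mul hA (frw_le_mul (X := d0) (X' := d0) (fun i j => le_refl _) hB) i j

end frwMat

lemma frw_absorb (f : ℕ → ℝ) (hf : ∀ n, 0 ≤ f n) (c : ℝ) (hc : 0 < c)
    (h : ∀ᶠ n in Filter.atTop, f n ≤ c^n) : ∃ C : ℝ, 0 < C ∧ ∀ n, f n ≤ C * c^n := by
  obtain ⟨n₀, hn₀⟩ := Filter.eventually_atTop.mp h
  have hsum0 : 0 ≤ ∑ r ∈ Finset.range n₀, f r / c^r :=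
    Finset.sum_nonneg fun r _ => div_nonneg (hf r) (pow_pos hc r).le
  refine ⟨(∑ r ∈ Finset.range n₀, f r / c^r) + 1, by linarith, fun n => ?_⟩
  by_cases hn : n₀ ≤ n
  · calc f n ≤ c^n := hn₀ n hn
      _ ≤ _ := by nlinarith [pow_pos hc n]
  · have hmem : n ∈ Finset.range n₀ := by simp only [Finset.mem_range]; omega
    have h1 : f n / c^n ≤ ∑ r ∈ Finset.range n₀, f r / c^r :=
      Finset.single_le_sum (fun r _ => div_nonneg (hf r) (pow_pos hc r).le) hmem
    have h2 : f n = (f n / c^n) * c^n := by field_simp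
    have hp := pow_pos hc n
    rw [h2]
    nlinarith

lemma frw_pow_compare {x y C : ℝ} (hx : 0 < x) (hC : 0 < C)
    (h : ∀ m : ℕ, 1 ≤ m → x^m ≤ C * y^m) : x ≤ y := by
  by_contra hlt
  push_neg at hlt
  have hy0 : 0 < y := by
    rcases lt_trichotomy y 0 with hy | hy | hy
    · have h1 := h 1 le_rfl
      simp only [pow_one] at h1
      nlinarith
    · have h1 := h 1 le_rfl
      simp only [pow_one, hy] at h1
      nlinarith
    · exact hy
  have hr : 1 < x / y := (one_lt_div hy0).mpr hlt
  have hb : ∀ m : ℕ, 1 ≤ m → (x/y)^m ≤ C := by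
    intro m hm
    rw [div_pow, div_le_iff₀ (pow_pos hy0 m)]
    exact h m hm
  obtain ⟨m, hm⟩ := Filter.eventually_atTop.mp
    (Filter.Tendsto.eventually_ge_atTop (tendsto_pow_atTop_atTop_of_one_lt hr) (C+1))
  have h1 := hb (max m 1) (le_max_right m 1)
  have h2 := hm (max m 1) (le_max_left m 1)
  linarith

lemma frw_pick_eps {lam T : ℝ} (hlam : 0 ≤ lam) (L : ℕ) (hL : 1 ≤ L)
    (hT : lam ^ L < T) : ∃ ε : ℝ, 0 < ε ∧ (lam + ε)^L < T := by
  have hT0 : 0 < T := lt_of_le_of_lt (pow_nonneg hlam L) hT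
  set T' := T ^ ((L:ℝ))⁻¹ with hT'
  have hT'pos : 0 < T' := Real.rpow_pos_of_pos hT0 _
  have hT'L : T' ^ L = T := by
    rw [hT', ← Real.rpow_natCast (T ^ ((L:ℝ))⁻¹) L, ← Real.rpow_mul hT0.le]
    rw [inv_mul_cancel₀ (by positivity : (L:ℝ) ≠ 0), Real.rpow_one]
  have hlt : lam < T' := by
    by_contra hge
    push_neg at hge
    have h2 : T' ^ L ≤ lam ^ L := pow_le_pow_left₀ hT'pos.le hge L
    rw [hT'L] at h2
    linarith
  refine ⟨(T' - lam)/2, by linarith, ?_⟩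
  rw [← hT'L]
  exact pow_lt_pow_left₀ (by linarith) (by linarith) (by omega)

open Filter ENNReal NNReal in
lemma frw_gelfand {k : ℕ} (hk : 0 < k) (Ac : Matrix (Fin k) (Fin k) ℂ) (ε : ℝ) (hε : 0 < ε) :
    ∃ C : ℝ, 0 < C ∧ ∀ n : ℕ, ∀ i j,
      ‖(Ac ^ n) i j‖ ≤ C * ((spectralRadius ℂ Ac).toReal + ε)^n := by
  haveI : Nonempty (Fin k) := ⟨⟨0, hk⟩⟩
  letI := Matrix.linftyOpNormedRing (n := Fin k) (α := ℂ)
  letI := Matrix.linftyOpNormedAlgebra (R := ℂ) (n := Fin k) (α := ℂ)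
  have hentry : ∀ (B : Matrix (Fin k) (Fin k) ℂ) (i j : Fin k), ‖B i j‖ ≤ ‖B‖ := by
    intro B i j
    have h1 : ‖B i j‖₊ ≤ ‖B‖₊ := by
      rw [Matrix.linfty_opNNNorm_def]
      calc ‖B i j‖₊ ≤ ∑ j' : Fin k, ‖B i j'‖₊ :=
            Finset.single_le_sum (f := fun j' => ‖B i j'‖₊) (fun _ _ => zero_le)
              (Finset.mem_univ j)
        _ ≤ _ := Finset.le_sup (f := fun i => ∑ j' : Fin k, ‖B i j'‖₊) (Finset.mem_univ i)
    exact h1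
  set lam := (spectralRadius ℂ Ac).toReal with hlam
  have hne : spectralRadius ℂ Ac ≠ ⊤ :=
    (lt_of_le_of_lt (spectrum.spectralRadius_le_nnnorm (𝕜 := ℂ) (a := Ac)) ENNReal.coe_lt_top).ne
  have hlam0 : 0 ≤ lam := ENNReal.toReal_nonneg
  have hgel := spectrum.pow_nnnorm_pow_one_div_tendsto_nhds_spectralRadius Ac
  have hρlt : spectralRadius ℂ Ac < ENNReal.ofReal (lam + ε) := by
    rw [show spectralRadius ℂ Ac = ENNReal.ofReal lam from (ENNReal.ofReal_toReal hne).symm]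
    exact (ENNReal.ofReal_lt_ofReal_iff (by linarith)).mpr (by linarith)
  have hev : ∀ᶠ n : ℕ in atTop, ((‖Ac ^ n‖₊ : ℝ≥0∞) ^ (1/(n:ℝ))) < ENNReal.ofReal (lam + ε) :=
    hgel.eventually_lt_const hρlt
  have hev2 : ∀ᶠ n : ℕ in atTop, ‖Ac ^ n‖ ≤ (lam + ε)^n := by
    filter_upwards [hev, Filter.eventually_ge_atTop 1] with n hn hn1
    have hn0 : (n:ℝ) ≠ 0 := by positivity
    have h2 : ((‖Ac ^ n‖₊ : ℝ≥0∞) ^ (1/(n:ℝ))) ^ (n:ℝ) ≤ (ENNReal.ofReal (lam + ε)) ^ (n:ℝ) :=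
      ENNReal.rpow_le_rpow hn.le (by positivity)
    rw [← ENNReal.rpow_mul, one_div, inv_mul_cancel₀ hn0, ENNReal.rpow_one] at h2
    have h3 : (ENNReal.ofReal (lam + ε)) ^ (n:ℝ) = ENNReal.ofReal ((lam + ε)^n) := by
      rw [ENNReal.rpow_natCast, ENNReal.ofReal_pow (by linarith)]
    rw [h3] at h2
    have h4 : (‖Ac ^ n‖₊ : ℝ≥0∞) = ENNReal.ofReal ‖Ac ^ n‖ := by
      rw [← coe_nnnorm, ENNReal.ofReal_coe_nnreal]
    rw [h4] at h2
    exact (ENNReal.ofReal_le_ofReal_iff (by positivity)).mp h2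
  obtain ⟨C, hC, hCb⟩ := frw_absorb (fun n => ‖Ac ^ n‖) (fun n => norm_nonneg _)
    (lam + ε) (by linarith) hev2
  exact ⟨C, hC, fun n i j => le_trans (hentry _ i j) (hCb n)⟩


/-- Lemma `h1` of "Thermodynamics of the Katok Map" (abstract symbolic form):
for a primitive 0-1 transition matrix `M` and a fixed state `p`, the number
`Sₙ` of admissible words of length `n+1` in which the symbol `p` occurs only
as the first and last symbol grows at an exponential rate strictly smaller
than `log ρ(M)`, where `ρ(M)` is the spectral radius of `M`. -/
theorem first_return_word_count_bound
    (k : ℕ) (hk : 2 ≤ k) (M : Matrix (Fin k) (Fin k) ℝ)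
    (hM01 : ∀ i j, M i j = 0 ∨ M i j = 1)
    (hprim : ∃ N : ℕ, 1 ≤ N ∧ ∀ i j, 0 < (M ^ N) i j)
    (p : Fin k)
    (S : ℕ → ℕ)
    (hS : ∀ n : ℕ, S n = Nat.card {w : Fin (n + 1) → Fin k //
      w 0 = p ∧ w (Fin.last n) = p ∧
      (∀ j : Fin (n + 1), 0 < (j : ℕ) → (j : ℕ) < n → w j ≠ p) ∧
      (∀ j : Fin n, M (w j.castSucc) (w j.succ) = 1)}) :
    ∃ C h : ℝ, 0 < C ∧ 0 ≤ h ∧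
      h < Real.log ((spectralRadius ℂ (M.map (Complex.ofReal ·))).toReal) ∧
      ∀ n : ℕ, 1 ≤ n → (S n : ℝ) ≤ C * Real.exp (h * n) := by
  classical
  obtain ⟨N, hN1, hNpos⟩ := hprim
  set m0 : Matrix (Fin k) (Fin k) ℕ :=
    Matrix.of (fun i j => if M i j = 1 then 1 else 0) with hm0def
  set b0 : Matrix (Fin k) (Fin k) ℕ :=
    Matrix.of (fun i j => if M i j = 1 ∧ i ≠ p ∧ j ≠ p then 1 else 0) with hb0def
  set lam : ℝ := (spectralRadius ℂ (M.map (Complex.ofReal ·))).toReal with hlamdef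
  -- complex matrix is cast of ℕ matrix
  have hMc : M.map (Complex.ofReal ·) = (Nat.castRingHom ℂ).mapMatrix m0 := by
    ext i j
    rcases hM01 i j with h | h <;>
      simp [Matrix.map_apply, RingHom.mapMatrix_apply, hm0def, h]
  have hMcpow : ∀ n : ℕ, ∀ i j, ‖((M.map (Complex.ofReal ·)) ^ n) i j‖ = ((m0 ^ n) i j : ℝ) := by
    intro n i j
    rw [hMc, ← map_pow]
    simp [RingHom.mapMatrix_apply, Matrix.map_apply]
  -- real powers of M are casts of powers of m0
  have hMpow : ∀ n : ℕ, ∀ i j, (M ^ n) i j = ((m0 ^ n) i j : ℝ) := by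
    have hM : M = (Nat.castRingHom ℝ).mapMatrix m0 := by
      ext i j
      rcases hM01 i j with h | h <;>
        simp [Matrix.map_apply, RingHom.mapMatrix_apply, hm0def, h]
    intro n i j
    rw [hM, ← map_pow]
    simp [RingHom.mapMatrix_apply, Matrix.map_apply]
  have hk0 : 0 < k := by omega
  -- Gelfand bound in ℕ cast form
  have gelN : ∀ ε : ℝ, 0 < ε → ∃ C : ℝ, 0 < C ∧
      ∀ n : ℕ, ∀ i j, ((m0 ^ n) i j : ℝ) ≤ C * (lam + ε)^n := by
    intro ε hε
    obtain ⟨C, hC, hCb⟩ := frw_gelfand hk0 (M.map (Complex.ofReal ·)) ε hε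
    exact ⟨C, hC, fun n i j => by rw [← hMcpow n i j]; exact hCb n i j⟩
  -- entries of m0^N are ≥ 1
  have m0N1 : ∀ i j, 1 ≤ (m0 ^ N) i j := by
    intro i j
    have h := hNpos i j
    rw [hMpow N i j] at h
    exact_mod_cast h
  have hlam0 : 0 ≤ lam := ENNReal.toReal_nonneg
  -- supermultiplicativity at p
  have hk2N : k ≤ (m0 ^ (2*N)) p p := by
    rw [show 2*N = N + N by ring, pow_add, Matrix.mul_apply]
    calc k = ∑ _l : Fin k, 1 := by simp
      _ ≤ _ := Finset.sum_le_sum fun l _ => by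
        calc 1 = 1 * 1 := by ring
          _ ≤ _ := Nat.mul_le_mul (m0N1 p l) (m0N1 l p)
  have hsupm : ∀ m : ℕ, k ^ m ≤ (m0 ^ (2*N*m)) p p := by
    intro m
    induction m with
    | zero => simp
    | succ m IH =>
      have h1 : (m0 ^ (2*N)) p p * (m0 ^ (2*N*m)) p p ≤ (m0 ^ (2*N*(m+1))) p p := by
        rw [show 2*N*(m+1) = 2*N + 2*N*m by ring, pow_add]
        exact frw_entry_mul _ _ p p p
      calc k ^ (m+1) = k * k ^ m := by ring
        _ ≤ (m0 ^ (2*N)) p p * (m0 ^ (2*N*m)) p p := Nat.mul_le_mul hk2N IH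
        _ ≤ _ := h1
  -- lam > 1
  have hlam1 : 1 < lam := by
    by_contra hle
    push_neg at hle
    have h2 : lam ^ (2*N) < 2 := lt_of_le_of_lt (pow_le_one₀ hlam0 hle) one_lt_two
    obtain ⟨ε, hε, hεlt⟩ := frw_pick_eps hlam0 (2*N) (by omega) h2
    obtain ⟨C, hC, hCb⟩ := gelN ε hε
    have hcomp : (2:ℝ) ≤ (lam + ε)^(2*N) := by
      refine frw_pow_compare two_pos hC fun m _ => ?_
      calc (2:ℝ)^m ≤ (k:ℝ)^m := by
            refine pow_le_pow_left₀ (by norm_num) ?_ m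
            exact_mod_cast hk
        _ ≤ ((m0 ^ (2*N*m)) p p : ℝ) := by exact_mod_cast hsupm m
        _ ≤ C * (lam + ε)^(2*N*m) := hCb (2*N*m) p p
        _ = C * ((lam + ε)^(2*N))^m := by rw [← pow_mul]
    linarith
  have hlampos : 0 < lam := by linarith
  -- the word count c
  set c : ℕ → ℕ := fun m => ∑ i : Fin k, ∑ j : Fin k, (b0 ^ m) i j with hcdef
  set d0 : Matrix (Fin k) (Fin k) ℕ :=
    Matrix.diagonal (fun i => if i = p then (0:ℕ) else 1) with hd0def
  have hb0le : ∀ i j, b0 i j ≤ m0 i j := by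
    intro i j
    by_cases h : M i j = 1 ∧ i ≠ p ∧ j ≠ p
    · simp [hb0def, hm0def, h, h.1]
    · simp only [hb0def, hm0def, Matrix.of_apply, if_neg h]
      exact Nat.zero_le _
  have hdb : d0 * b0 = b0 := by
    ext i j
    rw [hd0def, Matrix.diagonal_mul]
    by_cases h : i = p
    · simp [h, hb0def]
    · simp [h]
  set L : ℕ := 2*N+1 with hLdef
  have hL1 : 1 ≤ L := by omega
  -- Step C : some c m is beaten by lam^m
  have hmc : ∃ m : ℕ, 1 ≤ m ∧ (c m : ℝ) < lam ^ m := by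
    by_contra hcon
    push_neg at hcon
    -- renewal quantities
    set u : ℕ → ℕ := fun m => ((m0 ^ L) ^ m) p p with hudef
    set a' : ℕ → ℕ := fun r => (((m0 ^ L * d0) ^ r) * m0 ^ L) p p with ha'def
    have hu0 : u 0 = 1 := by simp [hudef, Matrix.one_apply_eq]
    have hrenew : ∀ m : ℕ, u (m+1) = ∑ r ∈ Finset.range (m+1), a' r * u (m - r) := by
      intro m
      have h := frw_renewal p (m0 ^ L) m 0
      simpa [hudef, ha'def] using h
    -- lower bound for a'
    have ha'lb : ∀ r : ℕ, c (r*L + 1) ≤ a' r := by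
      intro r
      refine le_trans ?_ (frw_F3 p m0 b0 N hN1 hb0le hdb r p p)
      exact frw_sandwich (m0^N) (b0^(r*L+1)) (m0^N) p (fun i => m0N1 p i) (fun j => m0N1 j p)
    set P : ℝ := lam ^ (2*N) with hPdef
    set β : ℝ := lam ^ L with hβdef
    have hPpos : 0 < P := pow_pos hlampos _
    have hβpos : 0 < β := pow_pos hlampos _
    have ha'real : ∀ r : ℕ, β^(r+1)/P ≤ (a' r : ℝ) := by
      intro r
      have h1 : β^(r+1) = lam^(r*L+1) * P := by
        rw [hβdef, hPdef, ← pow_mul, ← pow_add]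
        congr 1
        rw [hLdef]
        ring
      rw [h1, mul_div_assoc, div_self hPpos.ne', mul_one]
      calc lam^(r*L+1) ≤ (c (r*L+1) : ℝ) := hcon (r*L+1) (by omega)
        _ ≤ (a' r : ℝ) := by exact_mod_cast ha'lb r
    -- the geometric target
    set g : ℕ → ℝ := fun t => if t = 0 then 1 else β^t * (1+P⁻¹)^(t-1) / P with hgdef
    have hg0 : g 0 = 1 := by simp [hgdef]
    have hgsucc : ∀ t : ℕ, g (t+1) = β^(t+1) * (1+P⁻¹)^t / P := by
      intro t
      simp [hgdef]
    have hgpos : ∀ t, 0 < g t := by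
      intro t
      cases t with
      | zero => rw [hg0]; norm_num
      | succ t =>
        rw [hgsucc]
        have : (0:ℝ) < 1 + P⁻¹ := by positivity
        positivity
    have hident : ∀ m : ℕ, ∑ r ∈ Finset.range (m+1), (β^(r+1)/P) * g (m - r) = g (m+1) := by
      intro m
      induction m with
      | zero => simp [hg0, hgsucc 0]
      | succ m IH =>
        rw [Finset.sum_range_succ']
        have hshift : ∀ r : ℕ, (β^(r+1+1)/P) * g (m + 1 - (r+1)) = β * ((β^(r+1)/P) * g (m - r)) := by
          intro r
          rw [Nat.succ_sub_succ]
          ring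
        calc (∑ r ∈ Finset.range (m+1), (β^(r+1+1)/P) * g (m+1-(r+1))) + (β^(0+1)/P) * g (m+1-0)
            = β * (∑ r ∈ Finset.range (m+1), (β^(r+1)/P) * g (m - r)) + (β/P) * g (m+1) := by
              rw [Finset.mul_sum]
              congr 1
              · exact Finset.sum_congr rfl fun r _ => hshift r
              · norm_num
          _ = β * g (m+1) + (β/P) * g (m+1) := by rw [IH]
          _ = g (m+2) := by
              rw [hgsucc (m+1), hgsucc m]
              field_simp
              have hP : P * P⁻¹ = 1 := mul_inv_cancel₀ hPpos.ne'
              linear_combination (-(β^2*β^m*(1+P)*(P*P⁻¹+P⁻¹)^m)) * hP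
    -- u dominates g
    have hug : ∀ m : ℕ, g (m+1) ≤ (u (m+1) : ℝ) := by
      intro m
      induction m using Nat.strong_induction_on with
      | _ m IH =>
        rw [hrenew m, ← hident m]
        push_cast
        refine Finset.sum_le_sum fun r hr => ?_
        have hr' : r ≤ m := by
          have := Finset.mem_range.mp hr
          omega
        have h2 : g (m - r) ≤ (u (m - r) : ℝ) := by
          rcases Nat.eq_zero_or_pos (m - r) with h0 | hpos
          · rw [h0, hg0, hu0]
            norm_num
          · obtain ⟨t, ht⟩ : ∃ t, m - r = t + 1 := ⟨m - r - 1, by omega⟩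
            rw [ht]
            exact IH t (by omega)
        have h3 := ha'real r
        have h4 : (0:ℝ) ≤ β^(r+1)/P := by positivity
        exact mul_le_mul h3 h2 (hgpos _).le (Nat.cast_nonneg _)
    -- contradiction with Gelfand
    have hT : lam ^ L < β * (1 + P⁻¹) := by
      have : 0 < β * P⁻¹ := by positivity
      nlinarith
    obtain ⟨ε, hε, hεlt⟩ := frw_pick_eps hlam0 L hL1 hT
    obtain ⟨C, hC, hCb⟩ := gelN ε hε
    have hfinal : β * (1+P⁻¹) ≤ (lam + ε)^L := by
      refine frw_pow_compare (by positivity) (mul_pos hC (by positivity : (0:ℝ) < (1+P⁻¹)*P)) ?_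
      intro m hm
      obtain ⟨t, rfl⟩ : ∃ t, m = t + 1 := ⟨m - 1, by omega⟩
      have h1 : (β * (1+P⁻¹))^(t+1) = g (t+1) * ((1+P⁻¹) * P) := by
        rw [hgsucc t, mul_pow]
        field_simp
        have hP : P * P⁻¹ = 1 := mul_inv_cancel₀ hPpos.ne'
        linear_combination (1+P)*(P*P⁻¹+P⁻¹)^t * hP
      have h2 : (u (t+1) : ℝ) ≤ C * ((lam+ε)^L)^(t+1) := by
        have h3 : (m0 ^ (L*(t+1))) p p = u (t+1) := by
          rw [hudef, pow_mul]
        calc (u (t+1) : ℝ) = ((m0 ^ (L*(t+1))) p p : ℝ) := by rw [h3]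
          _ ≤ C * (lam+ε)^(L*(t+1)) := hCb (L*(t+1)) p p
          _ = C * ((lam+ε)^L)^(t+1) := by rw [← pow_mul]
      calc (β * (1+P⁻¹))^(t+1) = g (t+1) * ((1+P⁻¹) * P) := h1
        _ ≤ (u (t+1) : ℝ) * ((1+P⁻¹) * P) := by
            refine mul_le_mul_of_nonneg_right (hug t) (by positivity)
        _ ≤ (C * ((lam+ε)^L)^(t+1)) * ((1+P⁻¹) * P) := by
            refine mul_le_mul_of_nonneg_right h2 (by positivity)
        _ = C * ((1+P⁻¹) * P) * ((lam+ε)^L)^(t+1) := by ring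
    linarith
  obtain ⟨m₀, hm₀1, hm₀⟩ := hmc
  -- trivial bound for S 1
  have hS1 : S 1 ≤ 1 := by
    rw [hS 1]
    have hsub : Subsingleton {w : Fin (1 + 1) → Fin k //
        w 0 = p ∧ w (Fin.last 1) = p ∧
        (∀ j : Fin (1 + 1), 0 < (j : ℕ) → (j : ℕ) < 1 → w j ≠ p) ∧
        (∀ j : Fin 1, M (w j.castSucc) (w j.succ) = 1)} := by
      constructor
      rintro ⟨w1, hw1⟩ ⟨w2, hw2⟩
      apply Subtype.ext
      funext t
      fin_cases t
      · exact hw1.1.trans hw2.1.symm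
      · exact hw1.2.1.trans hw2.2.1.symm
    rw [Nat.card_eq_fintype_card]
    exact Fintype.card_le_one_iff_subsingleton.mpr hsub
  have b0_01 : ∀ i j, b0 i j = 0 ∨ b0 i j = 1 := by
    intro i j
    by_cases h : M i j = 1 ∧ i ≠ p ∧ j ≠ p <;> simp [hb0def, h]
  -- S (m+2) ≤ c m via injection into b0-paths
  have hSn : ∀ m : ℕ, S (m+2) ≤ c m := by
    intro m
    rw [hS (m+2)]
    have hcard := frw_card b0 b0_01 m
    have hc' : c m = Nat.card {v : Fin (m+1) → Fin k //
        ∀ t : Fin m, b0 (v t.castSucc) (v t.succ) = 1} := hcard.symm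
    rw [hc']
    clear hcard hc'
    have hF : ∀ w : {w : Fin (m + 2 + 1) → Fin k //
        w 0 = p ∧ w (Fin.last (m+2)) = p ∧
        (∀ j : Fin (m + 2 + 1), 0 < (j : ℕ) → (j : ℕ) < (m+2) → w j ≠ p) ∧
        (∀ j : Fin (m+2), M (w j.castSucc) (w j.succ) = 1)},
        ∀ t : Fin m, b0 ((fun s : Fin (m+1) => w.1 s.succ.castSucc) t.castSucc)
          ((fun s : Fin (m+1) => w.1 s.succ.castSucc) t.succ) = 1 := by
      rintro ⟨w, h0, hlast, hmid, hstep⟩ t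
      have hweq : ∀ x y : Fin (m+2+1), (x:ℕ) = (y:ℕ) → w x = w y := by
        intro x y hxy
        congr 1
        exact Fin.ext hxy
      show b0 (w (t.castSucc).succ.castSucc) (w t.succ.succ.castSucc) = 1
      have hstep' := hstep t.succ.castSucc
      have e1 : w (t.succ.castSucc).castSucc = w (t.castSucc).succ.castSucc :=
        hweq _ _ (by simp)
      have e2 : w (t.succ.castSucc).succ = w t.succ.succ.castSucc :=
        hweq _ _ (by simp)
      rw [e1, e2] at hstep'
      have htlt := t.isLt
      have hv1 : (((t.castSucc).succ.castSucc : Fin (m+2+1)) : ℕ) = (t:ℕ)+1 := by simp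
      have hv2 : ((t.succ.succ.castSucc : Fin (m+2+1)) : ℕ) = (t:ℕ)+2 := by simp
      have hp1 : w (t.castSucc).succ.castSucc ≠ p := by
        apply hmid <;> rw [hv1] <;> omega
      have hp2 : w t.succ.succ.castSucc ≠ p := by
        apply hmid <;> rw [hv2] <;> omega
      simp only [hb0def, Matrix.of_apply]
      rw [if_pos ⟨hstep', hp1, hp2⟩]
    refine Nat.card_le_card_of_injective
      (fun w => (⟨fun s : Fin (m+1) => w.1 s.succ.castSucc, hF w⟩ :
        {v : Fin (m+1) → Fin k // ∀ t : Fin m, b0 (v t.castSucc) (v t.succ) = 1})) ?_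
    rintro ⟨w1, hw1⟩ ⟨w2, hw2⟩ heq
    have heq' : ∀ s : Fin (m+1), w1 s.succ.castSucc = w2 s.succ.castSucc := by
      intro s
      exact congrFun (congrArg Subtype.val heq) s
    apply Subtype.ext
    funext x
    show w1 x = w2 x
    have hw1eq : ∀ y : Fin (m+2+1), (x:ℕ) = (y:ℕ) → w1 x = w1 y := by
      intro y hxy; congr 1; exact Fin.ext hxy
    have hw2eq : ∀ y : Fin (m+2+1), (y:ℕ) = (x:ℕ) → w2 y = w2 x := by
      intro y hxy; congr 1; exact Fin.ext hxy
    rcases Nat.eq_zero_or_pos (x:ℕ) with hx0 | hxpos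
    · have e1 : w1 x = w1 0 := by
        apply hw1eq
        rw [Fin.val_zero]
        omega
      have e2 : w2 0 = w2 x := by
        apply hw2eq
        rw [Fin.val_zero]
        omega
      rw [e1, hw1.1, ← hw2.1, e2]
    · rcases Nat.lt_or_ge (x:ℕ) (m+2) with hxlt | hxge
      · have ht : (x:ℕ) - 1 < m + 1 := by omega
        have h := heq' ⟨(x:ℕ)-1, ht⟩
        have hv : (((⟨(x:ℕ)-1, ht⟩ : Fin (m+1)).succ.castSucc : Fin (m+2+1)) : ℕ)
            = (x:ℕ)-1+1 := by simp
        have e1 : w1 x = w1 (⟨(x:ℕ)-1, ht⟩ : Fin (m+1)).succ.castSucc := by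
          apply hw1eq
          rw [hv]
          omega
        have e2 : w2 (⟨(x:ℕ)-1, ht⟩ : Fin (m+1)).succ.castSucc = w2 x := by
          apply hw2eq
          rw [hv]
          omega
        rw [e1, h, e2]
      · have hxval := x.isLt
        have e1 : w1 x = w1 (Fin.last (m+2)) := by
          apply hw1eq
          rw [Fin.val_last]
          omega
        have e2 : w2 (Fin.last (m+2)) = w2 x := by
          apply hw2eq
          rw [Fin.val_last]
          omega
        rw [e1, hw1.2.1, ← hw2.2.1, e2]
  -- submultiplicativity of c
  have csub : ∀ a b : ℕ, c (a+b) ≤ c a * c b := by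
    intro a b
    have h1 : c (a+b) = ∑ l : Fin k, (∑ i : Fin k, (b0^a) i l) * (∑ j : Fin k, (b0^b) l j) := by
      rw [hcdef]
      simp only [pow_add, Matrix.mul_apply]
      calc ∑ i : Fin k, ∑ j : Fin k, ∑ l : Fin k, (b0^a) i l * (b0^b) l j
          = ∑ i : Fin k, ∑ l : Fin k, ∑ j : Fin k, (b0^a) i l * (b0^b) l j :=
            Finset.sum_congr rfl fun i _ => Finset.sum_comm
        _ = ∑ l : Fin k, ∑ i : Fin k, ∑ j : Fin k, (b0^a) i l * (b0^b) l j := Finset.sum_comm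
        _ = _ := by
            refine Finset.sum_congr rfl fun l _ => ?_
            rw [Finset.sum_mul]
            exact Finset.sum_congr rfl fun i _ => (Finset.mul_sum _ _ _).symm
    rw [h1]
    calc ∑ l : Fin k, (∑ i : Fin k, (b0^a) i l) * (∑ j : Fin k, (b0^b) l j)
        ≤ ∑ l : Fin k, (∑ i : Fin k, (b0^a) i l) * c b := by
          refine Finset.sum_le_sum fun l _ => Nat.mul_le_mul_left _ ?_
          rw [hcdef]
          exact Finset.single_le_sum (f := fun l' => ∑ j : Fin k, (b0^b) l' j)
            (fun _ _ => Nat.zero_le _) (Finset.mem_univ l)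
      _ = (∑ l : Fin k, ∑ i : Fin k, (b0^a) i l) * c b := by rw [Finset.sum_mul]
      _ = c a * c b := by
          rw [hcdef]
          congr 1
          exact Finset.sum_comm
  have cpow : ∀ q r : ℕ, c (q * m₀ + r) ≤ (c m₀)^q * c r := by
    intro q
    induction q with
    | zero => intro r; simpa using le_refl (c r)
    | succ q IH =>
      intro r
      calc c ((q+1) * m₀ + r) = c (m₀ + (q * m₀ + r)) := by ring_nf
        _ ≤ c m₀ * c (q * m₀ + r) := csub _ _
        _ ≤ c m₀ * ((c m₀)^q * c r) := Nat.mul_le_mul_left _ (IH r)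
        _ = (c m₀)^(q+1) * c r := by ring
  -- choose h and C
  set γ : ℝ := max (c m₀ : ℝ) 1 with hγdef
  have hγ1 : 1 ≤ γ := le_max_right _ _
  have hγ0 : 0 < γ := by linarith
  have hγlt : γ < lam ^ m₀ := by
    rw [hγdef]
    apply max_lt hm₀
    exact one_lt_pow₀ hlam1 (by omega)
  set h : ℝ := Real.log γ / m₀ with hhdef
  have hm₀pos : (0:ℝ) < m₀ := by exact_mod_cast hm₀1
  have hh0 : 0 ≤ h := div_nonneg (Real.log_nonneg hγ1) hm₀pos.le
  have hhlt : h < Real.log lam := by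
    rw [hhdef, div_lt_iff₀ hm₀pos]
    calc Real.log γ < Real.log (lam ^ m₀) := Real.log_lt_log hγ0 hγlt
      _ = m₀ * Real.log lam := by rw [Real.log_pow]
      _ = Real.log lam * m₀ := by ring
  set C : ℝ := (∑ r ∈ Finset.range m₀, (c r : ℝ)) + 1 with hCdef
  have hCsum0 : 0 ≤ ∑ r ∈ Finset.range m₀, (c r : ℝ) :=
    Finset.sum_nonneg fun r _ => Nat.cast_nonneg _
  have hC0 : 0 < C := by rw [hCdef]; linarith
  have hC1 : 1 ≤ C := by rw [hCdef]; linarith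
  have hcr : ∀ r : ℕ, r < m₀ → (c r : ℝ) ≤ C - 1 := by
    intro r hr
    rw [hCdef]
    have := Finset.single_le_sum (f := fun r => (c r : ℝ))
      (fun _ _ => Nat.cast_nonneg _) (Finset.mem_range.mpr hr)
    linarith
  refine ⟨C, h, hC0, hh0, hhlt, ?_⟩
  intro n hn
  have hexp1 : 1 ≤ Real.exp (h * n) := by
    rw [← Real.exp_zero]
    apply Real.exp_le_exp.mpr
    positivity
  rcases Nat.lt_or_ge n 2 with hn2 | hn2
  · have hn1 : n = 1 := by omega
    subst hn1
    have hs1 : (S 1 : ℝ) ≤ 1 := by exact_mod_cast hS1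
    nlinarith [hexp1]
  · obtain ⟨m, rfl⟩ : ∃ m, n = m + 2 := ⟨n - 2, by omega⟩
    set q := m / m₀ with hq
    set r := m % m₀ with hr
    have hmqr : m = q * m₀ + r := by
      conv_lhs => rw [← Nat.div_add_mod m m₀]
      rw [hq, hr, Nat.mul_comm]
    have hrm₀ : r < m₀ := Nat.mod_lt _ (by omega)
    have hcm : (S (m+2) : ℝ) ≤ ((c m₀ : ℝ))^q * (C - 1) := by
      calc (S (m+2) : ℝ) ≤ (c m : ℝ) := by exact_mod_cast hSn m
        _ ≤ ((c m₀)^q * c r : ℕ) := by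
            exact_mod_cast (by rw [hmqr] at *; exact cpow q r : c m ≤ (c m₀)^q * c r)
        _ = ((c m₀ : ℝ))^q * (c r : ℝ) := by push_cast; ring
        _ ≤ ((c m₀ : ℝ))^q * (C - 1) := by
            refine mul_le_mul_of_nonneg_left (hcr r hrm₀) (by positivity)
    have hγq : ((c m₀ : ℝ))^q ≤ γ^q := pow_le_pow_left₀ (Nat.cast_nonneg _) (le_max_left _ _) q
    have hγexp : γ^q ≤ Real.exp (h * (m+2)) := by
      have hqle : (q : ℝ) ≤ ((m:ℝ)+2) / m₀ := by
        rw [le_div_iff₀ hm₀pos]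
        have : q * m₀ ≤ m := by omega
        have h2 : ((q * m₀ : ℕ) : ℝ) ≤ (m : ℝ) := by exact_mod_cast this
        push_cast at h2
        linarith
      calc γ^q = γ ^ (q : ℝ) := (Real.rpow_natCast γ q).symm
        _ ≤ γ ^ (((m:ℝ)+2) / m₀) := Real.rpow_le_rpow_of_exponent_le hγ1 hqle
        _ = Real.exp (h * (m+2)) := by
            rw [Real.rpow_def_of_pos hγ0, hhdef]
            congr 1
            ring
    have hq0 : (0:ℝ) ≤ ((c m₀ : ℝ))^q := by positivity
    calc (S (m+2) : ℝ) ≤ ((c m₀ : ℝ))^q * (C - 1) := hcm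
      _ ≤ γ^q * (C - 1) := mul_le_mul_of_nonneg_right hγq (by linarith)
      _ ≤ Real.exp (h * (m+2)) * C :=
          mul_le_mul hγexp (by linarith) (by linarith) (Real.exp_nonneg _)
      _ = C * Real.exp (h * ((m:ℝ)+2)) := by ring
      _ = C * Real.exp (h * ((m+2 : ℕ) : ℝ)) := by norm_num
end

section
/- Let ψ:(0,1]→(0,∞) be continuous with ∫₀^u dτ/ψ(τ) < ∞ for every u∈(0,1], and let κ₀ > 0. Define φ:ℝ²→ℝ² on the punctured disk {s=(s₁,s₂) : 0 < s₁²+s₂² < 1} by φ(s) = ( (1/(κ₀·(s₁²+s₂²))) · ∫₀^{s₁²+s₂²} dτ/ψ(τ) )^{1/2} · (s₁,s₂). Then φ is differentiable at every such point s and the determinant of its derivative satisfies det Dφ(s) = 1/(κ₀·ψ(s₁²+s₂²)). Consequently φ pushes the measure with density (κ₀·ψ(s₁²+s₂²))^{−1} with respect to Lebesgue measure forward to Lebesgue measure on the image. -/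
open Set MeasureTheory intervalIntegral


lemma det_aux (a : ℝ) (L : ℝ × ℝ →L[ℝ] ℝ) (w : ℝ × ℝ) :
    LinearMap.det ((a • ContinuousLinearMap.id ℝ (ℝ × ℝ) + L.smulRight w).toLinearMap)
      = a ^ 2 + a * L w := by
  have hw : L w = w.1 * L (1, 0) + w.2 * L (0, 1) := by
    have h : w = w.1 • ((1:ℝ), (0:ℝ)) + w.2 • ((0:ℝ), (1:ℝ)) := by
      ext <;> simp
    nth_rewrite 1 [h]
    rw [map_add, _root_.map_smul, _root_.map_smul, smul_eq_mul, smul_eq_mul]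
  rw [← LinearMap.det_toMatrix (Module.Basis.finTwoProd ℝ), Matrix.det_fin_two]
  simp only [LinearMap.toMatrix_apply, Module.Basis.finTwoProd_zero, Module.Basis.finTwoProd_one,
    Module.Basis.coe_finTwoProd_repr, ContinuousLinearMap.coe_coe, ContinuousLinearMap.add_apply,
    ContinuousLinearMap.smul_apply, ContinuousLinearMap.coe_id', id_eq,
    ContinuousLinearMap.smulRight_apply, Prod.smul_fst, Prod.smul_snd, Prod.fst_add,
    Prod.snd_add, smul_eq_mul, Matrix.cons_val_zero, Matrix.cons_val_one, Matrix.head_cons]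
  rw [hw]
  ring

/-- The coordinate change `φ` of Section 2 of "Thermodynamics of the Katok Map":
on the punctured unit disk, `φ` is differentiable with Jacobian determinant
`1/(κ₀ ψ(s₁²+s₂²))`; consequently `φ` pushes the measure with density
`(κ₀ ψ(s₁²+s₂²))⁻¹` with respect to Lebesgue measure forward to Lebesgue
measure on the image. -/
theorem coordinate_change_jacobian
    (ψ : ℝ → ℝ) (κ₀ : ℝ) (hκ₀ : 0 < κ₀)
    (hψc : ContinuousOn ψ (Ioc (0:ℝ) 1))
    (hψpos : ∀ u ∈ Ioc (0:ℝ) 1, 0 < ψ u)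
    (hint : ∀ u ∈ Ioc (0:ℝ) 1,
      IntervalIntegrable (fun τ => (ψ τ)⁻¹) volume 0 u)
    (φ : ℝ × ℝ → ℝ × ℝ)
    (hφ : ∀ s : ℝ × ℝ, φ s =
      (Real.sqrt ((1 / (κ₀ * (s.1 ^ 2 + s.2 ^ 2))) *
        ∫ τ in (0:ℝ)..(s.1 ^ 2 + s.2 ^ 2), (ψ τ)⁻¹)) • s) :
    (∀ s : ℝ × ℝ, 0 < s.1 ^ 2 + s.2 ^ 2 → s.1 ^ 2 + s.2 ^ 2 < 1 →
      DifferentiableAt ℝ φ s ∧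
      LinearMap.det (fderiv ℝ φ s).toLinearMap = 1 / (κ₀ * ψ (s.1 ^ 2 + s.2 ^ 2))) ∧
    Measure.map φ
      ((volume.restrict {s : ℝ × ℝ | 0 < s.1 ^ 2 + s.2 ^ 2 ∧ s.1 ^ 2 + s.2 ^ 2 < 1}).withDensity
        (fun s => ENNReal.ofReal (1 / (κ₀ * ψ (s.1 ^ 2 + s.2 ^ 2))))) =
      volume.restrict
        (φ '' {s : ℝ × ℝ | 0 < s.1 ^ 2 + s.2 ^ 2 ∧ s.1 ^ 2 + s.2 ^ 2 < 1}) := by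
  classical
  set S : Set (ℝ × ℝ) := {s : ℝ × ℝ | 0 < s.1 ^ 2 + s.2 ^ 2 ∧ s.1 ^ 2 + s.2 ^ 2 < 1} with hSdef
  set F : ℝ → ℝ := fun u => ∫ τ in (0:ℝ)..u, (ψ τ)⁻¹ with hFdef
  set p : ℝ → ℝ := fun u => (1 / (κ₀ * u)) * F u with hpdef
  set g : ℝ → ℝ := fun u => Real.sqrt (p u) with hgdef
  -- continuity of the integrand
  have hψinv : ∀ u ∈ Ioo (0:ℝ) 1, ContinuousAt (fun τ => (ψ τ)⁻¹) u := by
    intro u hu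
    have h1 : ContinuousAt ψ u := hψc.continuousAt (Ioc_mem_nhds hu.1 hu.2)
    exact h1.inv₀ (ne_of_gt (hψpos u ⟨hu.1, hu.2.le⟩))
  -- FTC : derivative of F
  have hFd : ∀ u ∈ Ioo (0:ℝ) 1, HasDerivAt F ((ψ u)⁻¹) u := by
    intro u hu
    exact integral_hasDerivAt_right (hint u ⟨hu.1, hu.2.le⟩)
      (ContinuousAt.stronglyMeasurableAtFilter isOpen_Ioo hψinv u hu)
      (hψinv u hu)
  have hFpos : ∀ u ∈ Ioo (0:ℝ) 1, 0 < F u := by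
    intro u hu
    exact intervalIntegral_pos_of_pos_on (hint u ⟨hu.1, hu.2.le⟩)
      (fun x hx => inv_pos.2 (hψpos x ⟨hx.1, hx.2.le.trans hu.2.le⟩)) hu.1
  have hppos : ∀ u ∈ Ioo (0:ℝ) 1, 0 < p u := by
    intro u hu
    have h1 : 0 < 1 / (κ₀ * u) := one_div_pos.2 (mul_pos hκ₀ hu.1)
    exact mul_pos h1 (hFpos u hu)
  -- derivative of p
  set p' : ℝ → ℝ := fun u => (-κ₀ / (κ₀ * u) ^ 2) * F u + (κ₀ * u)⁻¹ * (ψ u)⁻¹ with hp'def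
  have hpd : ∀ u ∈ Ioo (0:ℝ) 1, HasDerivAt p (p' u) u := by
    intro u hu
    have h0 : κ₀ * u ≠ 0 := (mul_pos hκ₀ hu.1).ne'
    have h1 : HasDerivAt (fun v : ℝ => κ₀ * v) κ₀ u := by
      simpa using (hasDerivAt_id u).const_mul κ₀
    have h2 : HasDerivAt (fun v : ℝ => (κ₀ * v)⁻¹) (-κ₀ / (κ₀ * u) ^ 2) u := h1.inv h0
    have h3 := h2.mul (hFd u hu)
    have hpalt : p = fun v => (κ₀ * v)⁻¹ * F v := by
      funext v; rw [hpdef]; simp [one_div]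
    rw [hpalt, hp'def]
    exact h3
  -- derivative of g
  set g' : ℝ → ℝ := fun u => p' u / (2 * Real.sqrt (p u)) with hg'def
  have hgd : ∀ u ∈ Ioo (0:ℝ) 1, HasDerivAt g (g' u) u := by
    intro u hu
    exact (hpd u hu).sqrt (ne_of_gt (hppos u hu))
  -- φ in terms of g
  have hφfun : φ = fun s : ℝ × ℝ => g (s.1 ^ 2 + s.2 ^ 2) • s := funext fun s => hφ s
  have hmem : ∀ s : ℝ × ℝ, s ∈ S → (s.1 ^ 2 + s.2 ^ 2) ∈ Ioo (0:ℝ) 1 := fun s hs => ⟨hs.1, hs.2⟩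
  -- candidate derivative
  set R : ℝ × ℝ → (ℝ × ℝ →L[ℝ] ℝ) := fun s =>
    (2 * s.1) • ContinuousLinearMap.fst ℝ ℝ ℝ + (2 * s.2) • ContinuousLinearMap.snd ℝ ℝ ℝ
    with hRdef
  set f' : ℝ × ℝ → (ℝ × ℝ →L[ℝ] ℝ × ℝ) := fun s =>
    g (s.1 ^ 2 + s.2 ^ 2) • ContinuousLinearMap.id ℝ (ℝ × ℝ)
      + (g' (s.1 ^ 2 + s.2 ^ 2) • R s).smulRight s with hf'def
  have hrd : ∀ s : ℝ × ℝ, HasFDerivAt (fun t : ℝ × ℝ => t.1 ^ 2 + t.2 ^ 2) (R s) s := by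
    intro s
    have h1 : HasFDerivAt (fun t : ℝ × ℝ => t.1 ^ 2)
        ((2 * s.1) • ContinuousLinearMap.fst ℝ ℝ ℝ) s := by
      have h := (hasFDerivAt_fst (𝕜 := ℝ) (p := s)).mul (hasFDerivAt_fst (𝕜 := ℝ) (p := s))
      refine HasFDerivAt.congr_fderiv (HasFDerivAt.congr_of_eventuallyEq h ?_) ?_
      · exact Filter.Eventually.of_forall fun t => pow_two t.1
      · rw [two_mul, add_smul]
    have h2 : HasFDerivAt (fun t : ℝ × ℝ => t.2 ^ 2)
        ((2 * s.2) • ContinuousLinearMap.snd ℝ ℝ ℝ) s := by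
      have h := (hasFDerivAt_snd (𝕜 := ℝ) (p := s)).mul (hasFDerivAt_snd (𝕜 := ℝ) (p := s))
      refine HasFDerivAt.congr_fderiv (HasFDerivAt.congr_of_eventuallyEq h ?_) ?_
      · exact Filter.Eventually.of_forall fun t => pow_two t.2
      · rw [two_mul, add_smul]
    exact h1.add h2
  have hd : ∀ s ∈ S, HasFDerivAt φ (f' s) s := by
    intro s hs
    rw [hφfun]
    have hh : HasFDerivAt (fun t : ℝ × ℝ => g (t.1 ^ 2 + t.2 ^ 2))
        (g' (s.1 ^ 2 + s.2 ^ 2) • R s) s :=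
      (hgd _ (hmem s hs)).comp_hasFDerivAt (h₂ := g) s (hrd s)
    exact hh.smul (hasFDerivAt_id s)
  -- determinant computation
  have hdet : ∀ s ∈ S, LinearMap.det (f' s).toLinearMap
      = 1 / (κ₀ * ψ (s.1 ^ 2 + s.2 ^ 2)) := by
    intro s hs
    set u : ℝ := s.1 ^ 2 + s.2 ^ 2 with hudef
    have hu : u ∈ Ioo (0:ℝ) 1 := hmem s hs
    have hRs : (g' u • R s) s = g' u * (2 * u) := by
      simp [hRdef, hudef]
      ring
    have h1 : LinearMap.det (f' s).toLinearMap = g u ^ 2 + g u * (g' u * (2 * u)) := by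
      rw [hf'def]
      simpa [hRs] using det_aux (g u) (g' u • R s) s
    rw [h1]
    have hgsq : g u ^ 2 = p u := Real.sq_sqrt (hppos u hu).le
    have hgne : g u ≠ 0 := ne_of_gt (Real.sqrt_pos.2 (hppos u hu))
    have h2 : g u * (g' u * (2 * u)) = u * p' u := by
      rw [hg'def]
      field_simp [hgdef]
      rw [show g u = Real.sqrt (p u) from rfl] at hgne ⊢
      field_simp
    rw [hgsq, h2]
    -- p u + u * p' u = 1 / (κ₀ * ψ u)
    have hψu : ψ u ≠ 0 := ne_of_gt (hψpos u ⟨hu.1, hu.2.le⟩)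
    have hu0 : u ≠ 0 := ne_of_gt hu.1
    have hκ : κ₀ ≠ 0 := ne_of_gt hκ₀
    rw [hpdef, hp'def]
    field_simp
    ring
  have hSmeas : MeasurableSet S := by
    have hc : Continuous fun s : ℝ × ℝ => s.1 ^ 2 + s.2 ^ 2 := by fun_prop
    have : S = (fun s : ℝ × ℝ => s.1 ^ 2 + s.2 ^ 2) ⁻¹' Ioo 0 1 := rfl
    rw [this]
    exact (isOpen_Ioo.preimage hc).measurableSet
  -- injectivity
  have hginj : ∀ s ∈ S, ∀ t ∈ S, φ s = φ t → s = t := by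
    intro s hs t ht hst
    have hFmono : StrictMonoOn F (Ioo (0:ℝ) 1) := by
      apply strictMonoOn_of_deriv_pos (convex_Ioo 0 1)
      · exact fun x hx => ((hFd x hx).continuousAt).continuousWithinAt
      · intro x hx
        rw [interior_Ioo] at hx
        rw [(hFd x hx).deriv]
        exact inv_pos.2 (hψpos x ⟨hx.1, hx.2.le⟩)
    have key : ∀ x : ℝ × ℝ, x ∈ S →
        (φ x).1 ^ 2 + (φ x).2 ^ 2 = F (x.1 ^ 2 + x.2 ^ 2) / κ₀ := by
      intro x hx
      have hux := hmem x hx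
      have hx0 : (x.1 ^ 2 + x.2 ^ 2) ≠ 0 := ne_of_gt hux.1
      rw [hφfun]
      simp only [Prod.smul_fst, Prod.smul_snd, smul_eq_mul]
      have : g (x.1 ^ 2 + x.2 ^ 2) ^ 2 = p (x.1 ^ 2 + x.2 ^ 2) :=
        Real.sq_sqrt (hppos _ hux).le
      have hexp : (g (x.1 ^ 2 + x.2 ^ 2) * x.1) ^ 2 + (g (x.1 ^ 2 + x.2 ^ 2) * x.2) ^ 2
          = g (x.1 ^ 2 + x.2 ^ 2) ^ 2 * (x.1 ^ 2 + x.2 ^ 2) := by ring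
      rw [hexp, this, hpdef]
      field_simp
    have hF_eq : F (s.1 ^ 2 + s.2 ^ 2) = F (t.1 ^ 2 + t.2 ^ 2) := by
      have h1 := key s hs
      have h2 := key t ht
      rw [hst] at h1
      have := h1.symm.trans h2
      field_simp at this
      linarith [this]
    have hu_eq : s.1 ^ 2 + s.2 ^ 2 = t.1 ^ 2 + t.2 ^ 2 :=
      hFmono.injOn (hmem s hs) (hmem t ht) hF_eq
    have hgne : g (s.1 ^ 2 + s.2 ^ 2) ≠ 0 :=
      ne_of_gt (Real.sqrt_pos.2 (hppos _ (hmem s hs)))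
    have : g (s.1 ^ 2 + s.2 ^ 2) • s = g (s.1 ^ 2 + s.2 ^ 2) • t := by
      have h1 := hφ s
      have h2 := hφ t
      rw [hφfun] at hst
      simpa [hu_eq] using hst
    exact smul_right_injective _ hgne this
  have hinj : InjOn φ S := fun s hs t ht h => hginj s hs t ht h
  constructor
  · intro s h1 h2
    have hs : s ∈ S := ⟨h1, h2⟩
    exact ⟨(hd s hs).differentiableAt, by rw [(hd s hs).fderiv]; exact hdet s hs⟩
  · -- measure part
    have hφcont : ContinuousOn φ S :=
      fun x hx => ((hd x hx).differentiableAt.continuousAt).continuousWithinAt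
    set u : ℝ × ℝ → ℝ × ℝ := S.piecewise φ 0 with hudef
    have humeas : Measurable u :=
      ContinuousOn.measurable_piecewise hφcont continuous_zero.continuousOn hSmeas
    have hueq : EqOn u φ S := piecewise_eqOn S φ 0
    have hud : ∀ x ∈ S, HasFDerivWithinAt u (f' x) S x := fun x hx =>
      ((hd x hx).hasFDerivWithinAt).congr (fun y hy => hueq hy) (hueq hx)
    have huinj : InjOn u S := hinj.congr hueq.symm
    have hmap := map_withDensity_abs_det_fderiv_eq_addHaar volume hSmeas.nullMeasurableSet hud huinj
    have hdens : (fun x : ℝ × ℝ => ENNReal.ofReal |(f' x).det|)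
        =ᵐ[volume.restrict S] fun x => ENNReal.ofReal (1 / (κ₀ * ψ (x.1 ^ 2 + x.2 ^ 2))) := by
      refine (ae_restrict_iff' hSmeas).2 (Filter.Eventually.of_forall fun x hx => ?_)
      have hpos : 0 < 1 / (κ₀ * ψ (x.1 ^ 2 + x.2 ^ 2)) := by
        have := hψpos _ ⟨(hmem x hx).1, (hmem x hx).2.le⟩
        positivity
      show ENNReal.ofReal |(f' x).det| = ENNReal.ofReal (1 / (κ₀ * ψ (x.1 ^ 2 + x.2 ^ 2)))
      rw [ContinuousLinearMap.det, hdet x hx, abs_of_pos hpos]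
    rw [withDensity_congr_ae hdens] at hmap
    have hmapφ : Measure.map φ
        ((volume.restrict S).withDensity
          fun x => ENNReal.ofReal (1 / (κ₀ * ψ (x.1 ^ 2 + x.2 ^ 2)))) =
        Measure.map u
        ((volume.restrict S).withDensity
          fun x => ENNReal.ofReal (1 / (κ₀ * ψ (x.1 ^ 2 + x.2 ^ 2)))) := by
      apply Measure.map_congr
      have hSae : S ∈ ae ((volume.restrict S).withDensity
          fun x => ENNReal.ofReal (1 / (κ₀ * ψ (x.1 ^ 2 + x.2 ^ 2)))) := by
        have h1 : ((volume.restrict S).withDensity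
            fun x => ENNReal.ofReal (1 / (κ₀ * ψ (x.1 ^ 2 + x.2 ^ 2)))) ≪
            volume.restrict S := withDensity_absolutelyContinuous _ _
        exact h1.ae_le (self_mem_ae_restrict hSmeas)
      filter_upwards [hSae] with x hx
      exact (hueq hx).symm
    rw [hmapφ, hmap, hueq.image_eq]
end

section
/- Let s=(s₁,s₂):[t₀,t₁]→ℝ² be a solution of the explicit slow-down system, and let (ζ₁,ζ₂):[t₀,t₁]→ℝ² be a differentiable solution of the variational equations dζ₁/dt = (log λ)·((ψ(u)+2s₁²ψ'(u))ζ₁ + 2s₁s₂ψ'(u)ζ₂), dζ₂/dt = −(log λ)·(2s₁s₂ψ'(u)ζ₁ + (ψ(u)+2s₂²ψ'(u))ζ₂), where u = s₁(t)²+s₂(t)², ψ(u)=(u/r₀)^α and ψ'(u)=(α/r₀^α)u^{α−1}. Then: (a) if s₁(t)²+s₂(t)² ≤ r₀/2 for all t∈[t₀,t₁], then ‖ζ(t)‖ ≤ λ^{(1+2α)(t−t₀)}·‖ζ(t₀)‖ for all t∈[t₀,t₁]; (b) if moreover s₁(t)²+s₂(t)² ≤ r₀/8 for all t∈[t₀,t₁],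 then ‖ζ(t)‖ ≤ λ^{t−t₀}·‖ζ(t₀)‖ for all t∈[t₀,t₁]. Here ‖ζ(t)‖ denotes the Euclidean norm of (ζ₁(t),ζ₂(t)). -/
open Set

/-- Scalar Grönwall inequality on a closed interval. -/
lemma gronwall_scalar (c t₀ t₁ : ℝ) (N N' : ℝ → ℝ)
    (hN : ∀ t ∈ Icc t₀ t₁, HasDerivAt N (N' t) t)
    (hb : ∀ t ∈ Icc t₀ t₁, N' t ≤ c * N t) :
    ∀ t ∈ Icc t₀ t₁, N t ≤ N t₀ * Real.exp (c * (t - t₀)) := by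
  intro t htm
  have ht₀ : t₀ ∈ Icc t₀ t₁ := ⟨le_refl _, le_trans htm.1 htm.2⟩
  set g : ℝ → ℝ := fun x => N x * Real.exp (-c * x) with hgdef
  have hg : ∀ x ∈ Icc t₀ t₁, HasDerivAt g ((N' x - c * N x) * Real.exp (-c * x)) x := by
    intro x hx
    have h1 : HasDerivAt (fun y : ℝ => -c * y) (-c) x := by
      simpa using (hasDerivAt_id x).const_mul (-c)
    have h2 : HasDerivAt (fun y => N y * Real.exp (-c * y)) _ x := (hN x hx).mul h1.exp
    convert h2 using 1
    ring
  have hanti : AntitoneOn g (Icc t₀ t₁) := by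
    apply antitoneOn_of_deriv_nonpos (convex_Icc _ _)
    · exact fun x hx => (hg x hx).continuousAt.continuousWithinAt
    · intro x hx
      rw [interior_Icc] at hx
      exact (hg x (Ioo_subset_Icc_self hx)).differentiableAt.differentiableWithinAt
    · intro x hx
      rw [interior_Icc] at hx
      rw [(hg x (Ioo_subset_Icc_self hx)).deriv]
      have := hb x (Ioo_subset_Icc_self hx)
      have he : (0:ℝ) < Real.exp (-c * x) := Real.exp_pos _
      nlinarith
  have key : g t ≤ g t₀ := hanti ht₀ htm htm.1
  have hNt : N t = g t * Real.exp (c * t) := by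
    simp only [hgdef, mul_assoc, ← Real.exp_add]
    ring_nf
    simp
  have hNt₀ : g t₀ * Real.exp (c * t) = N t₀ * Real.exp (c * (t - t₀)) := by
    simp only [hgdef, mul_assoc, ← Real.exp_add]
    ring_nf
  rw [hNt, ← hNt₀]
  exact mul_le_mul_of_nonneg_right key (Real.exp_pos _).le

/-- The growth bounds on solutions of the variational equations of the explicit
slow-down system used in the proof that `t₀ → -∞` as `r₀ → 0` in
"Thermodynamics of the Katok Map": (a) inside `D_{r₀/2}` the norm grows at most
like `λ^{(1+2α)(t-t₀)}`, and (b) inside `D_{r₀/8}` at most like `λ^{t-t₀}`. -/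
theorem variational_growth_bound
    (lam α r₀ t₀ t₁ : ℝ) (hlam : 1 < lam) (hα : 0 < α) (hα1 : α < 1)
    (hr₀ : 0 < r₀) (hr₀1 : r₀ < 1) (ht : t₀ ≤ t₁)
    (s₁ s₂ : ℝ → ℝ)
    (hs₁ : ∀ t ∈ Icc t₀ t₁,
      HasDerivAt s₁ ((Real.log lam / r₀ ^ α) * s₁ t * (s₁ t ^ 2 + s₂ t ^ 2) ^ α) t)
    (hs₂ : ∀ t ∈ Icc t₀ t₁,
      HasDerivAt s₂ (-((Real.log lam / r₀ ^ α) * s₂ t * (s₁ t ^ 2 + s₂ t ^ 2) ^ α)) t)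
    (ζ₁ ζ₂ : ℝ → ℝ)
    (hζ₁ : ∀ t ∈ Icc t₀ t₁,
      HasDerivAt ζ₁ (Real.log lam *
        ((((s₁ t ^ 2 + s₂ t ^ 2) / r₀) ^ α +
            2 * s₁ t ^ 2 * (α / r₀ ^ α * (s₁ t ^ 2 + s₂ t ^ 2) ^ (α - 1))) * ζ₁ t +
          2 * s₁ t * s₂ t * (α / r₀ ^ α * (s₁ t ^ 2 + s₂ t ^ 2) ^ (α - 1)) * ζ₂ t)) t)
    (hζ₂ : ∀ t ∈ Icc t₀ t₁,
      HasDerivAt ζ₂ (-(Real.log lam *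
        (2 * s₁ t * s₂ t * (α / r₀ ^ α * (s₁ t ^ 2 + s₂ t ^ 2) ^ (α - 1)) * ζ₁ t +
          (((s₁ t ^ 2 + s₂ t ^ 2) / r₀) ^ α +
            2 * s₂ t ^ 2 * (α / r₀ ^ α * (s₁ t ^ 2 + s₂ t ^ 2) ^ (α - 1))) * ζ₂ t))) t) :
    ((∀ t ∈ Icc t₀ t₁, s₁ t ^ 2 + s₂ t ^ 2 ≤ r₀ / 2) →
      ∀ t ∈ Icc t₀ t₁,
        Real.sqrt (ζ₁ t ^ 2 + ζ₂ t ^ 2) ≤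
          lam ^ ((1 + 2 * α) * (t - t₀)) * Real.sqrt (ζ₁ t₀ ^ 2 + ζ₂ t₀ ^ 2)) ∧
    ((∀ t ∈ Icc t₀ t₁, s₁ t ^ 2 + s₂ t ^ 2 ≤ r₀ / 8) →
      ∀ t ∈ Icc t₀ t₁,
        Real.sqrt (ζ₁ t ^ 2 + ζ₂ t ^ 2) ≤
          lam ^ (t - t₀) * Real.sqrt (ζ₁ t₀ ^ 2 + ζ₂ t₀ ^ 2)) := by
  have hloglam : 0 < Real.log lam := Real.log_pos hlam
  have hlam0 : 0 < lam := lt_trans one_pos hlam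
  -- abbreviations
  set u : ℝ → ℝ := fun t => s₁ t ^ 2 + s₂ t ^ 2 with hu
  set ψ : ℝ → ℝ := fun t => (u t / r₀) ^ α with hψ
  set φ : ℝ → ℝ := fun t => α / r₀ ^ α * u t ^ (α - 1) with hφ
  have hu0 : ∀ t, 0 ≤ u t := fun t => by positivity
  have hψ0 : ∀ t, 0 ≤ ψ t := fun t => Real.rpow_nonneg (by positivity) _
  have hφ0 : ∀ t, 0 ≤ φ t := fun t => by
    apply mul_nonneg (by positivity) (Real.rpow_nonneg (hu0 t) _)
  have hφu : ∀ t, φ t * u t = α * ψ t := by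
    intro t
    rcases eq_or_lt_of_le (hu0 t) with h | h
    · simp only [hψ, hφ, ← h]
      rw [Real.zero_rpow (by intro hc; rw [sub_eq_zero] at hc; exact (ne_of_lt hα1) hc),
        zero_div, Real.zero_rpow hα.ne']
      ring
    · simp only [hψ, hφ]
      rw [Real.div_rpow (hu0 t) hr₀.le]
      rw [mul_assoc, ← Real.rpow_add_one (ne_of_gt h)]
      ring_nf
  -- the derivative of N = ζ₁² + ζ₂²
  set N : ℝ → ℝ := fun t => ζ₁ t ^ 2 + ζ₂ t ^ 2 with hN
  have hN0 : ∀ t, 0 ≤ N t := fun t => by positivity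
  set N' : ℝ → ℝ := fun t =>
    2 * Real.log lam * (ψ t * (ζ₁ t ^ 2 - ζ₂ t ^ 2) +
      2 * φ t * (s₁ t ^ 2 * ζ₁ t ^ 2 - s₂ t ^ 2 * ζ₂ t ^ 2)) with hN'
  have hNd : ∀ t ∈ Icc t₀ t₁, HasDerivAt N (N' t) t := by
    intro t htm
    have h1 : HasDerivAt (fun y => ζ₁ y ^ 2 + ζ₂ y ^ 2) _ t := ((hζ₁ t htm).pow 2).add ((hζ₂ t htm).pow 2)
    convert h1 using 1
    simp only [hN', hψ, hφ, hu]
    push_cast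
    ring
  -- key step, parametric in K
  have main : ∀ K : ℝ, (∀ t ∈ Icc t₀ t₁, (1 + 2 * α) * ψ t ≤ K) →
      ∀ t ∈ Icc t₀ t₁,
        Real.sqrt (ζ₁ t ^ 2 + ζ₂ t ^ 2) ≤
          lam ^ (K * (t - t₀)) * Real.sqrt (ζ₁ t₀ ^ 2 + ζ₂ t₀ ^ 2) := by
    intro K hK t htm
    have hbd : ∀ x ∈ Icc t₀ t₁, N' x ≤ (2 * K * Real.log lam) * N x := by
      intro x hx
      have hNxeq : N x = ζ₁ x ^ 2 + ζ₂ x ^ 2 := rfl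
      have huxeq : u x = s₁ x ^ 2 + s₂ x ^ 2 := rfl
      have h1 : ψ x * (ζ₁ x ^ 2 - ζ₂ x ^ 2) ≤ ψ x * N x := by
        rw [hNxeq]
        have := hψ0 x
        nlinarith [sq_nonneg (ζ₂ x)]
      have hs1u : s₁ x ^ 2 ≤ u x := by rw [huxeq]; nlinarith [sq_nonneg (s₂ x)]
      have h2 : 2 * φ x * (s₁ x ^ 2 * ζ₁ x ^ 2 - s₂ x ^ 2 * ζ₂ x ^ 2) ≤
          2 * α * ψ x * N x := by
        have hfu := hφu x
        have h2a : φ x * (s₁ x ^ 2 * ζ₁ x ^ 2) ≤ φ x * u x * ζ₁ x ^ 2 := by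
          have h0 := hφ0 x
          nlinarith [mul_nonneg h0 (mul_nonneg (sub_nonneg.mpr hs1u) (sq_nonneg (ζ₁ x)))]
        have h2b : 0 ≤ φ x * (s₂ x ^ 2 * ζ₂ x ^ 2) := by positivity
        have h2c : 0 ≤ φ x * u x * ζ₂ x ^ 2 := by
          have := hφ0 x; have := hu0 x; positivity
        rw [hNxeq]
        nlinarith
      have hKx := hK x hx
      have hψx := hψ0 x
      have hNx := hN0 x
      simp only [hN']
      have hsum : ψ x * (ζ₁ x ^ 2 - ζ₂ x ^ 2) +
          2 * φ x * (s₁ x ^ 2 * ζ₁ x ^ 2 - s₂ x ^ 2 * ζ₂ x ^ 2) ≤ K * N x := by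
        have : (1 + 2 * α) * ψ x * N x ≤ K * N x :=
          mul_le_mul_of_nonneg_right hKx hNx
        nlinarith
      nlinarith
    have hgron := gronwall_scalar (2 * K * Real.log lam) t₀ t₁ N N' hNd hbd t htm
    -- now take square roots
    have hsq : Real.sqrt (N t) ≤ Real.sqrt (N t₀ * Real.exp (2 * K * Real.log lam * (t - t₀))) :=
      Real.sqrt_le_sqrt hgron
    have hexp : Real.exp (2 * K * Real.log lam * (t - t₀)) =
        (lam ^ (K * (t - t₀))) ^ 2 := by
      rw [← Real.rpow_natCast (lam ^ (K * (t - t₀))) 2, ← Real.rpow_mul hlam0.le]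
      rw [Real.rpow_def_of_pos hlam0]
      ring_nf
    rw [hexp, Real.sqrt_mul (hN0 t₀), Real.sqrt_sq (by positivity)] at hsq
    calc Real.sqrt (ζ₁ t ^ 2 + ζ₂ t ^ 2) = Real.sqrt (N t) := rfl
      _ ≤ Real.sqrt (N t₀) * lam ^ (K * (t - t₀)) := hsq
      _ = lam ^ (K * (t - t₀)) * Real.sqrt (ζ₁ t₀ ^ 2 + ζ₂ t₀ ^ 2) := by
          rw [mul_comm]
    done
  constructor
  · intro hsmall t htm
    have := main (1 + 2 * α) (fun x hx => by
      have hψ1 : ψ x ≤ 1 := by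
        apply Real.rpow_le_one (by positivity) _ hα.le
        have := hsmall x hx
        rw [div_le_one hr₀]
        have huxe : u x = s₁ x ^ 2 + s₂ x ^ 2 := rfl
        rw [huxe]
        linarith
      nlinarith [mul_nonneg (by linarith : (0:ℝ) ≤ 1 + 2 * α)
        (by linarith : (0:ℝ) ≤ 1 - ψ x)]) t htm
    exact this
  · intro hsmall t htm
    have hlog8 : (2:ℝ) ≤ Real.log 8 := by
      have h1 : Real.exp 2 < 8 := by
        have := Real.exp_one_lt_d9
        have h2 : Real.exp 2 = Real.exp 1 * Real.exp 1 := by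
          rw [← Real.exp_add]; norm_num
        nlinarith [Real.exp_pos 1]
      have := Real.log_le_log (Real.exp_pos 2) h1.le
      rwa [Real.log_exp] at this
    have h8 : (1:ℝ) + 2 * α ≤ (8:ℝ) ^ α := by
      have h1 : 1 + α * Real.log 8 ≤ Real.exp (α * Real.log 8) := by
        linarith [Real.add_one_le_exp (α * Real.log 8)]
      rw [Real.rpow_def_of_pos (by norm_num : (0:ℝ) < 8), mul_comm (Real.log 8) α]
      have : 2 * α ≤ α * Real.log 8 := by nlinarith
      linarith [h1, this]
    have := main 1 (fun x hx => by
      have hψ8 : ψ x ≤ (1/8 : ℝ) ^ α := by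
        apply Real.rpow_le_rpow (by positivity) _ hα.le
        have := hsmall x hx
        rw [div_le_div_iff₀ hr₀ (by norm_num)]
        have huxe : u x = s₁ x ^ 2 + s₂ x ^ 2 := rfl
        rw [huxe]
        linarith
      have hmul : ((1/8 : ℝ)) ^ α * (8:ℝ) ^ α = 1 := by
        rw [← Real.mul_rpow (by norm_num) (by norm_num)]
        norm_num
      have h18 : (0:ℝ) ≤ (1/8:ℝ) ^ α := Real.rpow_nonneg (by norm_num) _
      calc (1 + 2 * α) * ψ x ≤ (1 + 2 * α) * (1/8:ℝ) ^ α :=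
            mul_le_mul_of_nonneg_left hψ8 (by linarith)
        _ ≤ (8:ℝ) ^ α * (1/8:ℝ) ^ α := mul_le_mul_of_nonneg_right h8 h18
        _ = 1 := by rw [mul_comm]; exact hmul) t htm
    simpa using this
end
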